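/- For real a with -1 < a < 1, the integral of tan(x)^a over x from 0 to π/2 equals π / (2 cos(πa/2)). -/

import Mathlib

open Real MeasureTheory intervalIntegral Set

lemma beta_val (a : ℝ) (h1 : -1 < a) (h2 : a < 1) :
    ∫ x in (0:ℝ)..1, x ^ ((a-1)/2) * (1-x) ^ ((-a-1)/2)
      = π / Real.cos (π * a / 2) := by
  set u : ℝ := (1+a)/2 with hu
  set v : ℝ := (1-a)/2 with hv
  have hu0 : 0 < u := by rw [hu]; linarith
  have hv0 : 0 < v := by rw [hv]; linarith
  have huv : (u:ℂ) + (v:ℂ) = 1 := by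
    have : u + v = (1:ℝ) := by rw [hu, hv]; ring
    exact_mod_cast this
  have hbeta : Complex.betaIntegral u v = (π : ℂ) / Complex.sin (π * u) := by
    have h1 := Complex.Gamma_mul_Gamma_eq_betaIntegral
      (s := (u:ℂ)) (t := (v:ℂ)) (by simpa using hu0) (by simpa using hv0)
    have h2 := Complex.Gamma_mul_Gamma_one_sub (u : ℂ)
    have hv1 : (1 : ℂ) - u = v := by rw [← huv]; ring
    rw [hv1] at h2
    rw [huv, Complex.Gamma_one, one_mul] at h1
    rw [← h1, h2]
  have hre : Complex.betaIntegral u v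
      = ((∫ x in (0:ℝ)..1, x ^ ((a-1)/2) * (1-x) ^ ((-a-1)/2) : ℝ) : ℂ) := by
    rw [Complex.betaIntegral, ← intervalIntegral.integral_ofReal]
    apply intervalIntegral.integral_congr
    intro x hx
    rw [Set.uIcc_of_le (by norm_num : (0:ℝ) ≤ 1)] at hx
    obtain ⟨hx0, hx1⟩ := hx
    have e1 : ((x:ℂ)) ^ ((u:ℂ) - 1) = ((x ^ ((a-1)/2) : ℝ) : ℂ) := by
      rw [show ((u:ℂ) - 1) = (((a-1)/2 : ℝ) : ℂ) by push_cast [hu]; ring,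
        ← Complex.ofReal_cpow hx0]
    have e2 : ((1 - x : ℂ)) ^ ((v:ℂ) - 1) = (((1-x) ^ ((-a-1)/2) : ℝ) : ℂ) := by
      rw [show ((1:ℂ) - x) = ((1 - x : ℝ) : ℂ) by push_cast; ring,
        show ((v:ℂ) - 1) = (((-a-1)/2 : ℝ) : ℂ) by push_cast [hv]; ring,
        ← Complex.ofReal_cpow (by linarith)]
    simp only [e1, e2, ← Complex.ofReal_mul]
  have hsin : Real.sin (π * u) = Real.cos (π * a / 2) := by
    rw [hu, show π * ((1+a)/2) = π/2 - (-(π * a / 2)) by ring, Real.sin_pi_div_two_sub,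
      Real.cos_neg]
  have : ((∫ x in (0:ℝ)..1, x ^ ((a-1)/2) * (1-x) ^ ((-a-1)/2) : ℝ) : ℂ)
      = ((π / Real.cos (π * a / 2) : ℝ) : ℂ) := by
    rw [← hre, hbeta, ← hsin]
    push_cast [Complex.ofReal_sin]
    ring_nf
  exact_mod_cast this

theorem stmt8 (a : ℝ) (h1 : -1 < a) (h2 : a < 1) :
    ∫ x in (0:ℝ)..(π/2), (Real.tan x) ^ a = π / (2 * Real.cos (π * a / 2)) := by
  have hpi : (0:ℝ) < π/2 := by positivity
  -- substitution x = sin θ ^ 2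
  have himg : (fun θ => Real.sin θ ^ 2) '' Ioo 0 (π/2) = Ioo (0:ℝ) 1 := by
    ext y
    constructor
    · rintro ⟨θ, ⟨hθ0, hθ1⟩, rfl⟩
      have hs0 : 0 < Real.sin θ := Real.sin_pos_of_pos_of_lt_pi hθ0 (by linarith [Real.pi_pos])
      have hc0 : 0 < Real.cos θ := Real.cos_pos_of_mem_Ioo ⟨by linarith [Real.pi_pos], hθ1⟩
      constructor
      · show 0 < Real.sin θ ^ 2; positivity
      · show Real.sin θ ^ 2 < 1
        nlinarith [Real.sin_sq_add_cos_sq θ]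
    · rintro ⟨hy0, hy1⟩
      refine ⟨Real.arcsin (Real.sqrt y), ⟨?_, ?_⟩, ?_⟩
      · exact Real.arcsin_pos.2 (Real.sqrt_pos.2 hy0)
      · exact Real.arcsin_lt_pi_div_two.2 (by
          rw [show (1:ℝ) = Real.sqrt 1 by simp]
          exact Real.sqrt_lt_sqrt hy0.le hy1)
      · show Real.sin (Real.arcsin (Real.sqrt y)) ^ 2 = y
        rw [Real.sin_arcsin (by linarith [Real.sqrt_nonneg y]) (by
            rw [show (1:ℝ) = Real.sqrt 1 by simp]
            exact Real.sqrt_le_sqrt hy1.le), Real.sq_sqrt hy0.le]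
  have hinj : InjOn (fun θ => Real.sin θ ^ 2) (Ioo 0 (π/2)) := by
    intro x hx y hy hxy
    have hsx : 0 ≤ Real.sin x := Real.sin_nonneg_of_nonneg_of_le_pi hx.1.le (by linarith [Real.pi_pos, hx.2])
    have hsy : 0 ≤ Real.sin y := Real.sin_nonneg_of_nonneg_of_le_pi hy.1.le (by linarith [Real.pi_pos, hy.2])
    have hs : Real.sin x = Real.sin y := by
      have := congrArg Real.sqrt hxy
      rwa [Real.sqrt_sq hsx, Real.sqrt_sq hsy] at this
    exact Real.injOn_sin ⟨by linarith [hx.1, Real.pi_pos], hx.2.le⟩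
      ⟨by linarith [hy.1, Real.pi_pos], hy.2.le⟩ hs
  have hderiv : ∀ θ ∈ Ioo (0:ℝ) (π/2),
      HasDerivWithinAt (fun θ => Real.sin θ ^ 2) (2 * Real.sin θ * Real.cos θ) (Ioo 0 (π/2)) θ := by
    intro θ _
    have := ((Real.hasDerivAt_sin θ).fun_pow 2).hasDerivWithinAt (s := Ioo (0:ℝ) (π/2))
    simpa [mul_comm, mul_assoc, pow_one] using this
  have hsub := MeasureTheory.integral_image_eq_integral_abs_deriv_smul
    measurableSet_Ioo hderiv hinj
    (fun x => x ^ ((a-1)/2) * (1-x) ^ ((-a-1)/2))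
  rw [himg] at hsub
  have heq : ∀ θ ∈ Ioo (0:ℝ) (π/2),
      |2 * Real.sin θ * Real.cos θ| •
        ((Real.sin θ ^ 2) ^ ((a-1)/2) * (1 - Real.sin θ ^ 2) ^ ((-a-1)/2))
      = 2 * Real.tan θ ^ a := by
    intro θ ⟨hθ0, hθ1⟩
    have hs : 0 < Real.sin θ := Real.sin_pos_of_pos_of_lt_pi hθ0 (by linarith [Real.pi_pos])
    have hc : 0 < Real.cos θ := Real.cos_pos_of_mem_Ioo ⟨by linarith [Real.pi_pos], hθ1⟩
    have h1 : (1:ℝ) - Real.sin θ ^ 2 = Real.cos θ ^ 2 := by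
      have := Real.sin_sq_add_cos_sq θ; linarith
    rw [h1, smul_eq_mul, abs_of_pos (by positivity)]
    have e1 : (Real.sin θ ^ 2) ^ ((a-1)/2) = Real.sin θ ^ (a-1) := by
      rw [← Real.rpow_natCast (Real.sin θ) 2, ← Real.rpow_mul hs.le]
      congr 1; push_cast; ring
    have e2 : (Real.cos θ ^ 2) ^ ((-a-1)/2) = Real.cos θ ^ (-a-1) := by
      rw [← Real.rpow_natCast (Real.cos θ) 2, ← Real.rpow_mul hc.le]
      congr 1; push_cast; ring
    rw [e1, e2, Real.tan_eq_sin_div_cos, Real.div_rpow hs.le hc.le]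
    rw [show Real.sin θ ^ (a-1) = Real.sin θ ^ a / Real.sin θ from
        Real.rpow_sub_one hs.ne' a]
    rw [show Real.cos θ ^ (-a-1) = (Real.cos θ ^ a)⁻¹ / Real.cos θ by
        rw [show -a-1 = -a - 1 from rfl, Real.rpow_sub_one hc.ne', Real.rpow_neg hc.le]]
    field_simp
  rw [MeasureTheory.setIntegral_congr_fun measurableSet_Ioo heq] at hsub
  have hbeta := beta_val a h1 h2
  rw [intervalIntegral.integral_of_le (by norm_num : (0:ℝ) ≤ 1),
    MeasureTheory.integral_Ioc_eq_integral_Ioo] at hbeta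
  have hcos : 0 < Real.cos (π * a / 2) := by
    apply Real.cos_pos_of_mem_Ioo
    constructor
    · nlinarith [mul_pos Real.pi_pos (show (0:ℝ) < a + 1 by linarith)]
    · nlinarith [mul_pos Real.pi_pos (show (0:ℝ) < 1 - a by linarith)]
  have hint : ∫ θ in Ioo (0:ℝ) (π/2), 2 * Real.tan θ ^ a
      = 2 * ∫ θ in Ioo (0:ℝ) (π/2), Real.tan θ ^ a := by
    rw [MeasureTheory.integral_const_mul]
  rw [intervalIntegral.integral_of_le hpi.le, MeasureTheory.integral_Ioc_eq_integral_Ioo]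
  have : 2 * ∫ θ in Ioo (0:ℝ) (π/2), Real.tan θ ^ a = π / Real.cos (π * a / 2) := by
    rw [← hint, ← hsub, hbeta]
  field_simp at this ⊢
  linarith [this]
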